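/- The first-order recursive computability ordering >_rco is stable by substitution: if t >_rco u and θ is a substitution, then tθ >_rco uθ. -/

import Mathlib

/-- First-order algebraic terms over symbols `F` and variables `X`. -/
inductive FOTerm (F X : Type) : Type
  | var : X → FOTerm F X
  | app : F → List (FOTerm F X) → FOTerm F X

/-- Statuses: lexicographic or multiset comparison of arguments. -/
inductive Status : Type
  | lex
  | mul

/-- Left-to-right lexicographic extension of a "greater-than" relation. -/
inductive LexExt {α : Type*} (r : α → α → Prop) : List α → List α → Prop
  | head {t u : α} {ts us : List α} : r t u → LexExt r (t :: ts) (u :: us)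
  | tail {t : α} {ts us : List α} : LexExt r ts us → LexExt r (t :: ts) (t :: us)

/-- Multiset extension of a "greater-than" relation. -/
def MulExt {α : Type*} (r : α → α → Prop) (ts us : List α) : Prop :=
  ∃ Z X Y : Multiset α, X ≠ 0 ∧ (ts : Multiset α) = Z + X ∧ (us : Multiset α) = Z + Y ∧
    ∀ y ∈ Y, ∃ x ∈ X, r x y

/-- Extension of a relation to lists of terms according to a status. -/
def statExt {α : Type*} : Status → (α → α → Prop) → List α → List α → Prop
  | Status.lex, r => LexExt r
  | Status.mul, r => MulExt r

/-- Strict part `>_F` of the quasi-order `≥_F`. -/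
def PrecGT {F : Type*} (ge : F → F → Prop) (f g : F) : Prop := ge f g ∧ ¬ ge g f

/-- Equivalence `≃_F` associated with the quasi-order `≥_F`. -/
def PrecEquiv {F : Type*} (ge : F → F → Prop) (f g : F) : Prop := ge f g ∧ ge g f

/-- One step of the computability-closure operator `CR`: given a candidate relation `R`,
`CRStep ge stat R t u` holds iff `t >_rco u` can be derived by one application of
(arg), (prec), (call) or (red) with premises taken in `R`. -/
def CRStep {F X : Type} (ge : F → F → Prop) (stat : F → Status)
    (R : FOTerm F X → FOTerm F X → Prop) (t u : FOTerm F X) : Prop :=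
  -- (arg)
  (∃ f ts, t = FOTerm.app f ts ∧ u ∈ ts) ∨
  -- (prec)
  (∃ f ts g us, t = FOTerm.app f ts ∧ u = FOTerm.app g us ∧ PrecGT ge f g ∧
    ∀ v ∈ us, R t v) ∨
  -- (call)
  (∃ f ts g us, t = FOTerm.app f ts ∧ u = FOTerm.app g us ∧ PrecEquiv ge f g ∧
    (∀ v ∈ us, R t v) ∧ statExt (stat f) R ts us) ∨
  -- (red)
  (∃ f ts v, t = FOTerm.app f ts ∧ R t v ∧ R v u)

/-- The first-order recursive computability ordering `>_rco`:
the least fixpoint of the monotone operator `CRStep`. -/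
def Rco {F X : Type} (ge : F → F → Prop) (stat : F → Status)
    (t u : FOTerm F X) : Prop :=
  ∀ S : FOTerm F X → FOTerm F X → Prop,
    (∀ a b, CRStep ge stat S a b → S a b) → S t u

/-- Application of a substitution (a map from variables to terms) to a term. -/
def substFO {F X : Type} (θ : X → FOTerm F X) : FOTerm F X → FOTerm F X
  | FOTerm.var x => θ x
  | FOTerm.app f ts => FOTerm.app f (ts.attach.map fun t => substFO θ t.1)
decreasing_by
  have h := List.sizeOf_lt_of_mem t.2
  simp only [FOTerm.app.sizeOf_spec]
  omega


lemma substFO_app {F X : Type} (θ : X → FOTerm F X) (f : F) (ts : List (FOTerm F X)) :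
    substFO θ (FOTerm.app f ts) = FOTerm.app f (ts.map (substFO θ)) := by
  rw [substFO]
  congr 1
  simp [List.attach_map_val]

lemma lexExt_map {α β : Type*} {r : α → α → Prop} {r' : β → β → Prop} {f : α → β}
    (h : ∀ a b, r a b → r' (f a) (f b)) :
    ∀ {ts us : List α}, LexExt r ts us → LexExt r' (ts.map f) (us.map f) := by
  intro ts us hl
  induction hl with
  | head hr => exact LexExt.head (h _ _ hr)
  | tail _ ih => exact LexExt.tail ih

lemma mulExt_map {α β : Type*} {r : α → α → Prop} {r' : β → β → Prop} {f : α → β}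
    (h : ∀ a b, r a b → r' (f a) (f b)) :
    ∀ {ts us : List α}, MulExt r ts us → MulExt r' (ts.map f) (us.map f) := by
  rintro ts us ⟨Z, Xs, Y, hX, hts, hus, hY⟩
  refine ⟨Z.map f, Xs.map f, Y.map f, by simpa using hX, ?_, ?_, ?_⟩
  · rw [← Multiset.map_coe, hts, Multiset.map_add]
  · rw [← Multiset.map_coe, hus, Multiset.map_add]
  · intro y hy
    obtain ⟨y0, hy0, rfl⟩ := Multiset.mem_map.mp hy
    obtain ⟨x, hx, hr⟩ := hY y0 hy0
    exact ⟨f x, Multiset.mem_map_of_mem f hx, h _ _ hr⟩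

/-- The first-order recursive computability ordering `>_rco` is stable by
substitution: if `t >_rco u` then `tθ >_rco uθ`. -/
theorem rco_stable_subst {F X : Type} (ge : F → F → Prop)
    (ge_refl : ∀ f, ge f f)
    (ge_trans : ∀ f g h, ge f g → ge g h → ge f h)
    (stat : F → Status) :
    ∀ (t u : FOTerm F X) (θ : X → FOTerm F X),
      Rco ge stat t u → Rco ge stat (substFO θ t) (substFO θ u) := by
  intro t u θ h S hS
  refine h (fun a b => S (substFO θ a) (substFO θ b)) ?_
  intro a b hab
  apply hS
  rcases hab with ⟨f, ts, rfl, hu⟩ | ⟨f, ts, g, us, rfl, rfl, hfg, hv⟩ |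
    ⟨f, ts, g, us, rfl, rfl, hfg, hv, hst⟩ | ⟨f, ts, v, rfl, h1, h2⟩
  · refine Or.inl ⟨f, ts.map (substFO θ), by rw [substFO_app], ?_⟩
    exact List.mem_map_of_mem hu
  · refine Or.inr (Or.inl ⟨f, ts.map (substFO θ), g, us.map (substFO θ),
      by rw [substFO_app], by rw [substFO_app], hfg, ?_⟩)
    intro v hv'
    obtain ⟨v0, hv0, rfl⟩ := List.mem_map.mp hv'
    simpa [substFO_app] using hv v0 hv0
  · refine Or.inr (Or.inr (Or.inl ⟨f, ts.map (substFO θ), g, us.map (substFO θ),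
      by rw [substFO_app], by rw [substFO_app], hfg, ?_, ?_⟩))
    · intro v hv'
      obtain ⟨v0, hv0, rfl⟩ := List.mem_map.mp hv'
      simpa [substFO_app] using hv v0 hv0
    · cases hst' : stat f with
      | lex =>
        rw [hst'] at hst
        exact lexExt_map (f := substFO θ) (r' := S) (fun a b hab => hab) hst
      | mul =>
        rw [hst'] at hst
        exact mulExt_map (f := substFO θ) (r' := S) (fun a b hab => hab) hst
  · exact Or.inr (Or.inr (Or.inr ⟨f, ts.map (substFO θ), substFO θ v,
      by rw [substFO_app], by simpa [substFO_app] using h1, h2⟩))
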